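/- arXiv:1112.4152 — 3 statements merged into one kernel-verified Lean document; each statement's English description precedes it below -/
import Mathlib

section
/- There exists a family of continuum-many pairwise disjoint Bernstein subsets of ℝ. -/
/-- A set `S ⊆ ℝ` is Bernstein if every perfect set (nonempty, closed, no
isolated points) meets both `S` and its complement. -/
def IsBernstein (S : Set ℝ) : Prop :=
  ∀ P : Set ℝ, Perfect P → P.Nonempty → (S ∩ P).Nonempty ∧ (P \ S).Nonempty

open Cardinal Set Ordinal
open scoped Classical

noncomputable section BernsteinAux

/-- Every nonempty perfect subset of `ℝ` has cardinality at least the continuum. -/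
lemma BernsteinAux.perfect_card (P : Set ℝ) (hP : Perfect P) (hne : P.Nonempty) : 𝔠 ≤ #P := by
  obtain ⟨f, hfr, -, hfi⟩ := hP.exists_nat_bool_injection hne
  have : #(ℕ → Bool) ≤ #P :=
    mk_le_of_injective (f := fun x => (⟨f x, hfr (mem_range_self x)⟩ : P))
      (fun a b hab => hfi (by simpa using congrArg Subtype.val hab))
  simpa [mk_arrow] using this

/-- A nonempty perfect set cannot be covered by a set of size `< 𝔠`. -/
lemma BernsteinAux.avoid (P : Set ℝ) (hP : Perfect P) (hne : P.Nonempty) (Q : Set ℝ)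
    (hQ : #Q < 𝔠) : (P \ Q).Nonempty := by
  rw [Set.nonempty_iff_ne_empty]
  intro h
  have hsub : P ⊆ Q := by
    intro x hx
    by_contra hxQ
    exact absurd h (Set.nonempty_iff_ne_empty.mp ⟨x, hx, hxQ⟩)
  exact absurd ((BernsteinAux.perfect_card P hP hne).trans (mk_le_mk_of_subset hsub))
    (not_le.mpr hQ)

/-- Index type: pairs (perfect nonempty set, real number). -/
abbrev BernsteinAux.PIdx := {P : Set ℝ // Perfect P ∧ P.Nonempty} × ℝ

/-- A well-ordered type of order type `ord 𝔠`. -/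
abbrev BernsteinAux.TT := (Cardinal.continuum.ord).ToType

namespace BernsteinAux

/-- There are at most continuum many nonempty perfect subsets of `ℝ`. -/
lemma count_perfect : #{P : Set ℝ // Perfect P ∧ P.Nonempty} ≤ 𝔠 := by
  have key : ∀ P : {P : Set ℝ // Perfect P ∧ P.Nonempty}, ∃ f : ℕ → ℝ,
      closure (range f) = (P : Set ℝ) := by
    rintro ⟨P, hP, hne⟩
    obtain ⟨t, ht, htd⟩ := TopologicalSpace.exists_countable_dense P
    have hc : closure ((↑) '' t) = P := by
      apply subset_antisymm
      · exact closure_minimal (by rintro x ⟨y, -, rfl⟩; exact y.2) hP.closed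
      · intro x hx
        have : (⟨x, hx⟩ : P) ∈ closure t := htd _
        exact closure_subtype.mp this
    have htne : ((↑) '' t : Set ℝ).Nonempty := by
      rcases hne with ⟨x, hx⟩
      rcases eq_empty_or_nonempty ((↑) '' t : Set ℝ) with h | h
      · rw [h, closure_empty] at hc; rw [← hc] at hx; exact absurd hx (notMem_empty x)
      · exact h
    obtain ⟨f, hf⟩ := Set.Countable.exists_eq_range (ht.image _) htne
    exact ⟨f, by rw [← hf, hc]⟩
  choose F hF using key
  have hFi : Function.Injective F := by
    intro P Q h
    apply Subtype.ext
    rw [← hF P, ← hF Q, h]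
  calc #{P : Set ℝ // Perfect P ∧ P.Nonempty} ≤ #(ℕ → ℝ) := mk_le_of_injective hFi
    _ = 𝔠 := by simp [mk_arrow, mk_real, continuum_power_aleph0]

variable (e : PIdx → TT)

/-- Transfinite recursion: pick, for each index in the well-order, a fresh point of the
corresponding perfect set not chosen before. -/
def bg : TT → ℝ :=
  (IsWellFounded.wf (r := ((· < ·) : TT → TT → Prop))).fix fun a ih =>
    if h : ∃ i : PIdx, e i = a then
      (avoid h.choose.1.1 h.choose.1.2.1 h.choose.1.2.2
        (range fun b : Iio a => ih b b.2)
        (lt_of_le_of_lt mk_range_le (mk_Iio_ord_toType a))).some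
    else 0

lemma bg_eq (a : TT) : bg e a =
    if h : ∃ i : PIdx, e i = a then
      (avoid h.choose.1.1 h.choose.1.2.1 h.choose.1.2.2
        (range fun b : Iio a => bg e b)
        (lt_of_le_of_lt mk_range_le (mk_Iio_ord_toType a))).some
    else 0 := by
  rw [bg, WellFounded.fix_eq]

lemma bg_spec (he : Function.Injective e) (i : PIdx) :
    bg e (e i) ∈ (i.1 : Set ℝ) ∧ bg e (e i) ∉ range (fun b : Iio (e i) => bg e b) := by
  have h : ∃ j : PIdx, e j = e i := ⟨i, rfl⟩
  have hji : h.choose = i := he h.choose_spec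
  have hmem := (avoid i.1.1 i.1.2.1 i.1.2.2
        (range fun b : Iio (e i) => bg e b)
        (lt_of_le_of_lt mk_range_le (mk_Iio_ord_toType (e i)))).some_mem
  rw [bg_eq, dif_pos h]
  simp only [hji]
  exact ⟨hmem.1, hmem.2⟩

lemma ge_inj (he : Function.Injective e) : Function.Injective (fun i => bg e (e i)) := by
  intro i j hij
  by_contra hne
  have hne' : e i ≠ e j := fun h => hne (he h)
  rcases lt_or_gt_of_ne hne' with h | h
  · exact (bg_spec e he j).2 ⟨⟨e i, h⟩, hij⟩
  · exact (bg_spec e he i).2 ⟨⟨e j, h⟩, hij.symm⟩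

/-- The labelling function: maps a chosen point to the real coordinate of its index. -/
def bF : ℝ → ℝ := fun x =>
  if h : ∃ i : PIdx, bg e (e i) = x then h.choose.2 else 0

lemma bF_spec (he : Function.Injective e) (i : PIdx) : bF e (bg e (e i)) = i.2 := by
  have h : ∃ j : PIdx, bg e (e j) = bg e (e i) := ⟨i, rfl⟩
  have := ge_inj e he h.choose_spec
  rw [bF, dif_pos h, this]

lemma perfect_univ : Perfect (Set.univ : Set ℝ) := by
  refine ⟨isClosed_univ, fun x _ => ?_⟩
  rw [AccPt]
  simp only [Filter.principal_univ, inf_top_eq]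
  infer_instance

end BernsteinAux

end BernsteinAux

/-- There exist continuum-many pairwise disjoint Bernstein subsets of `ℝ`
(indexed injectively by `ℝ`, which has cardinality the continuum). -/
theorem exists_continuum_many_disjoint_bernstein_sets :
    ∃ S : ℝ → Set ℝ, Function.Injective S ∧
      (Pairwise fun i j => Disjoint (S i) (S j)) ∧ ∀ r : ℝ, IsBernstein (S r) := by
  classical
  open BernsteinAux in
  -- obtain an injection from the index type into the well-ordered type `TT`
  have hcard : #PIdx ≤ #TT := by
    rw [Cardinal.mk_toType, Cardinal.card_ord]
    calc #PIdx = #{P : Set ℝ // Perfect P ∧ P.Nonempty} * #ℝ := by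
          rw [Cardinal.mk_prod]; simp
      _ ≤ 𝔠 * 𝔠 := by
          exact mul_le_mul' count_perfect (le_of_eq Cardinal.mk_real)
      _ = 𝔠 := by
          rw [Cardinal.mul_eq_self (Cardinal.aleph0_le_continuum)]
  obtain ⟨e⟩ := (Cardinal.le_def _ _).mp hcard
  have he : Function.Injective e := e.injective
  -- the fibers of `bF` are the desired Bernstein sets
  refine ⟨fun r => bF e ⁻¹' {r}, ?_, ?_, ?_⟩
  · -- injectivity
    intro r r' hrr
    have hx : bg e (e (⟨Set.univ, perfect_univ, ⟨0, trivial⟩⟩, r)) ∈ bF e ⁻¹' {r} := by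
      simp only [Set.mem_preimage, Set.mem_singleton_iff]
      exact bF_spec e he _
    simp only at hrr
    have hx2 := hrr ▸ hx
    simp only [Set.mem_preimage, Set.mem_singleton_iff] at hx2
    rw [← hx2, bF_spec e he _]
  · -- pairwise disjoint
    intro r r' hne
    apply Set.disjoint_left.mpr
    intro x hx hx'
    simp only [Set.mem_preimage, Set.mem_singleton_iff] at hx hx'
    exact hne (hx.symm.trans hx')
  · -- each fiber is Bernstein
    intro r P hP hPne
    constructor
    · refine ⟨bg e (e (⟨P, hP, hPne⟩, r)), ?_, ?_⟩
      · simp only [Set.mem_preimage, Set.mem_singleton_iff]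
        exact bF_spec e he _
      · exact (bg_spec e he (⟨P, hP, hPne⟩, r)).1
    · refine ⟨bg e (e (⟨P, hP, hPne⟩, r + 1)), (bg_spec e he (⟨P, hP, hPne⟩, r + 1)).1, ?_⟩
      simp only [Set.mem_preimage, Set.mem_singleton_iff]
      rw [bF_spec e he _]
      exact by simp
end

section
/- If (X_m)_{m∈ℕ} is a countable family of subsets of ℝ whose union is a Bernstein set, then the union of their closures is co-countable in ℝ. -/
open Filter Topology Set

/-- Every neighborhood of a point in Cantor space contains another point. -/
lemma cantor_no_isolated (a : ℕ → Bool) {U : Set (ℕ → Bool)} (hU : U ∈ 𝓝 a) :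
    ∃ b ∈ U, b ≠ a := by
  set b : ℕ → (ℕ → Bool) := fun n i => if i = n then !a i else a i with hb
  have htend : Filter.Tendsto b Filter.atTop (𝓝 a) := by
    rw [tendsto_pi_nhds]
    intro i
    apply Filter.Tendsto.congr' (f₁ := fun _ => a i)
    · filter_upwards [Filter.eventually_ge_atTop (i + 1)] with n hn
      simp only [hb]
      rw [if_neg (by omega)]
    · exact tendsto_const_nhds
  have : ∀ᶠ n in Filter.atTop, b n ∈ U := htend.eventually_mem hU
  obtain ⟨n, hn⟩ := this.exists
  refine ⟨b n, hn, fun hba => ?_⟩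
  have := congrFun hba n
  simp [hb] at this

/-- If the union of a countable family of sets of reals is a Bernstein set,
then the union of their closures is co-countable in `ℝ`. -/
theorem union_closures_cocountable_of_bernstein_union (X : ℕ → Set ℝ)
    (h : IsBernstein (⋃ m, X m)) :
    Set.Countable (⋃ m, closure (X m))ᶜ := by
  by_contra hunc
  set C : Set ℝ := (⋃ m, closure (X m))ᶜ with hCdef
  have hmeas : MeasurableSet C :=
    (MeasurableSet.iUnion (fun m => isClosed_closure.measurableSet)).compl
  obtain ⟨t', ht'le, ht'polish, hclosed, -⟩ := hmeas.isClopenable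
  obtain ⟨f, hrange, hcont, hinj⟩ :=
    @IsClosed.exists_nat_bool_injection_of_not_countable ℝ t' ht'polish C hclosed hunc
  have hcont' : @Continuous (ℕ → Bool) ℝ Pi.topologicalSpace
      UniformSpace.toTopologicalSpace f := continuous_le_rng ht'le hcont
  clear hcont hclosed ht'polish ht'le t'
  set P : Set ℝ := Set.range f with hP
  have hPc : IsCompact P := isCompact_range hcont'
  have hperf : Perfect P := by
    refine ⟨hPc.isClosed, ?_⟩
    rw [preperfect_iff_nhds]
    rintro x ⟨a, rfl⟩ U hU
    obtain ⟨b, hbU, hba⟩ := cantor_no_isolated a (hcont'.continuousAt.preimage_mem_nhds hU)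
    exact ⟨f b, ⟨hbU, mem_range_self b⟩, fun hfb => hba (hinj hfb)⟩
  have hPne : P.Nonempty := ⟨f (fun _ => false), mem_range_self _⟩
  obtain ⟨⟨x, hxS, hxP⟩, -⟩ := h P hperf hPne
  have hxC : x ∈ C := hrange hxP
  apply hxC
  obtain ⟨s, ⟨m, rfl⟩, hxs⟩ := hxS
  exact Set.mem_iUnion.2 ⟨m, subset_closure hxs⟩
end

section
/- Let L be a topological space, d a metric on L, and suppose d fragments every nonempty subset Y of L in the following two-case sense: either Y meets a fixed open 'metrizable part' where fragmentation holds, or Y is contained in a scattered closed subset. Then d fragments L. Concretely: if K is a topological space, M ⊆ K is open, the subspace topology on M is induced by the restriction of d, and K \ M is scattered, then d fragments K. -/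
/-- Fragmentation of a space split into an open metrizable part and a
scattered remainder: if `K` is a topological space, `d` is a metric on the set
`K`, `M ⊆ K` is open, the subspace topology on `M` is the one induced by the
restriction of `d`, and `K \ M` is scattered, then `d` fragments `K`: for
every `ε > 0` every nonempty `F ⊆ K` has a relatively open nonempty piece of
`d`-diameter less than `ε`. -/
theorem fragmented_of_open_metrizable_part_and_scattered_rest
    (K : Type*) [TopologicalSpace K] (d : K → K → ℝ)
    (hnonneg : ∀ x y, 0 ≤ d x y)
    (hd0 : ∀ x y, d x y = 0 ↔ x = y)
    (hsymm : ∀ x y, d x y = d y x)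
    (htri : ∀ x y z, d x z ≤ d x y + d y z)
    (M : Set K) (hMopen : IsOpen M)
    (hMtop : ∀ V ⊆ M, (∃ W : Set K, IsOpen W ∧ V = W ∩ M) ↔
      ∀ x ∈ V, ∃ ε > (0 : ℝ), ∀ y ∈ M, d x y < ε → y ∈ V)
    (hscat : ∀ F ⊆ Mᶜ, F.Nonempty → ∃ x ∈ F, ∃ U : Set K, IsOpen U ∧ U ∩ F = {x}) :
    ∀ ε : ℝ, 0 < ε → ∀ F : Set K, F.Nonempty →
      ∃ U : Set K, IsOpen U ∧ (U ∩ F).Nonempty ∧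
        ∀ x ∈ U ∩ F, ∀ y ∈ U ∩ F, d x y < ε := by
  intro ε hε F hF
  by_cases hFM : (F ∩ M).Nonempty
  · obtain ⟨x, hxF, hxM⟩ := hFM
    set V : Set K := {y | y ∈ M ∧ d x y < ε / 3} with hV
    have hVM : V ⊆ M := fun y hy => hy.1
    have hright : ∀ z ∈ V, ∃ δ > (0 : ℝ), ∀ y ∈ M, d z y < δ → y ∈ V := by
      intro z hz
      refine ⟨ε / 3 - d x z, by linarith [hz.2], fun y hyM hyd => ⟨hyM, ?_⟩⟩
      calc d x y ≤ d x z + d z y := htri x z y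
        _ < ε / 3 := by linarith
    obtain ⟨W, hWopen, hWV⟩ := (hMtop V hVM).mpr hright
    refine ⟨W ∩ M, hWopen.inter hMopen, ⟨x, ?_, hxF⟩, ?_⟩
    · have : x ∈ V := ⟨hxM, by simpa [(hd0 x x).mpr rfl] using by linarith⟩
      rw [hWV] at this; exact this
    · intro a ha b hb
      have haV : a ∈ V := by rw [hWV]; exact ha.1
      have hbV : b ∈ V := by rw [hWV]; exact hb.1
      calc d a b ≤ d a x + d x b := htri a x b
        _ = d x a + d x b := by rw [hsymm]
        _ < ε := by linarith [haV.2, hbV.2]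
  · have hFc : F ⊆ Mᶜ := by
      intro y hy
      by_contra h
      exact hFM ⟨y, hy, not_not.mp h⟩
    obtain ⟨x, hxF, U, hUopen, hUF⟩ := hscat F hFc hF
    refine ⟨U, hUopen, ⟨x, by rw [hUF]; rfl⟩, ?_⟩
    · intro a ha b hb
      have ha' : a = x := by have := hUF ▸ ha; simpa using this
      have hb' : b = x := by have := hUF ▸ hb; simpa using this
      rw [ha', hb', (hd0 x x).mpr rfl]; exact hε
end
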